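/- Let $G$ be a group and define $Tor(G) = \{a \in G : \text{for each } n \text{ there is } k \geq 1 \text{ with } a^k \in G^n\}$, where $G^n$ is the $n$-th term of the lower central series of $G$. Then $Tor(G)$ is a normal subgroup of $G$, and if $G$ is abelian, $Tor(G)$ is exactly the torsion subgroup of $G$. -/

import Mathlib

open Subgroup
open scoped commutatorElement

section Aux

universe u

variable {G : Type u} [Group G]

private lemma comm_mul_center_left (g h z : G) (hz : z ∈ Subgroup.center G) :
    ⁅g * z, h⁆ = ⁅g, h⁆ := by
  have hz' : z * h * z⁻¹ = h := by
    rw [← Subgroup.mem_center_iff.mp hz h, mul_inv_cancel_right]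
  calc ⁅g * z, h⁆ = g * (z * h * z⁻¹) * g⁻¹ * h⁻¹ := by group
    _ = ⁅g, h⁆ := by rw [hz']; group

private lemma comm_mul_center_right (g h w : G) (hw : w ∈ Subgroup.center G) :
    ⁅g, h * w⁆ = ⁅g, h⁆ := by
  have hw' : w * g⁻¹ * w⁻¹ = g⁻¹ := by
    rw [← Subgroup.mem_center_iff.mp hw g⁻¹, mul_inv_cancel_right]
  calc ⁅g, h * w⁆ = g * h * (w * g⁻¹ * w⁻¹) * h⁻¹ := by group
    _ = ⁅g, h⁆ := by rw [hw']; group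

private lemma finite_commutatorSet_of_finite_quotient_center
    (hQ : Finite (G ⧸ Subgroup.center G)) : Finite (commutatorSet G) := by
  have hsub : commutatorSet G ⊆
      Set.range (fun p : (G ⧸ Subgroup.center G) × (G ⧸ Subgroup.center G) =>
        ⁅p.1.out, p.2.out⁆) := by
    rintro x ⟨g, h, rfl⟩
    refine ⟨(QuotientGroup.mk g, QuotientGroup.mk h), ?_⟩
    obtain ⟨z, hzeq⟩ := QuotientGroup.mk_out_eq_mul (Subgroup.center G) g
    obtain ⟨w, hweq⟩ := QuotientGroup.mk_out_eq_mul (Subgroup.center G) h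
    simp only [hzeq, hweq]
    rw [comm_mul_center_right _ _ _ w.2, comm_mul_center_left _ _ _ z.2]
  exact ((Set.finite_range _).subset hsub).to_subtype

private lemma finite_of_closure_pair_torsion {A : Type u} [CommGroup A] {x y : A}
    (hx : IsOfFinOrder x) (hy : IsOfFinOrder y)
    (h : Subgroup.closure ({x, y} : Set A) = ⊤) : Finite A := by
  have fx : Finite (Subgroup.zpowers x) := hx.finite_zpowers.to_subtype
  have fy : Finite (Subgroup.zpowers y) := hy.finite_zpowers.to_subtype
  refine Finite.of_surjective
    (f := fun p : (Subgroup.zpowers x) × (Subgroup.zpowers y) => (p.1 : A) * p.2) ?_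
  intro a
  have hmem : a ∈ Subgroup.closure ({x, y} : Set A) := h.symm ▸ Subgroup.mem_top a
  obtain ⟨m, n, hmn⟩ := Subgroup.mem_closure_pair.mp hmem
  exact ⟨(⟨x ^ m, Subgroup.zpow_mem_zpowers x m⟩, ⟨y ^ n, Subgroup.zpow_mem_zpowers y n⟩), hmn⟩

private lemma lcs_map_eq {H : Type*} [Group H] (f : G →* H) (hf : Function.Surjective f) :
    ∀ n, Subgroup.map f ((⊤ : Subgroup G).lowerCentralSeries n) = (⊤ : Subgroup H).lowerCentralSeries n
  | 0 => by simpa using Subgroup.map_top_of_surjective f hf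
  | n + 1 => by
    show Subgroup.map f ⁅(⊤ : Subgroup G).lowerCentralSeries n, ⊤⁆ = ⁅(⊤ : Subgroup H).lowerCentralSeries n, ⊤⁆
    rw [Subgroup.map_commutator, lcs_map_eq f hf n, Subgroup.map_top_of_surjective f hf]

/-- A nilpotent group generated by two torsion elements is finite. -/
private lemma finite_of_nilpotent_two_torsion :
    ∀ (n : ℕ) (H : Type u) (_ : Group H) (x y : H), IsOfFinOrder x → IsOfFinOrder y →
      Subgroup.closure ({x, y} : Set H) = ⊤ → (⊤ : Subgroup H).lowerCentralSeries n = ⊥ → Finite H := by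
  intro n
  induction n with
  | zero =>
    intro H _ x y _ _ _ hbot
    have hsub : Subsingleton H := by
      constructor
      intro a b
      have ha : a ∈ (⊤ : Subgroup H).lowerCentralSeries 0 := Subgroup.mem_top a
      have hb : b ∈ (⊤ : Subgroup H).lowerCentralSeries 0 := Subgroup.mem_top b
      rw [hbot, Subgroup.mem_bot] at ha hb
      rw [ha, hb]
    exact Finite.of_subsingleton
  | succ n ih =>
    intro H _ x y hx hy hgen hbot
    set Z := Subgroup.center H with hZ
    have hsurj : Function.Surjective (QuotientGroup.mk' Z) := QuotientGroup.mk'_surjective Z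
    have hle : (⊤ : Subgroup H).lowerCentralSeries n ≤ Z := by
      intro p hp
      rw [hZ, Subgroup.mem_center_iff]
      intro g
      have : ⁅p, g⁆ ∈ (⊥ : Subgroup H) := by
        rw [← hbot]
        exact Subgroup.commutator_mem_commutator hp (Subgroup.mem_top g)
      rw [Subgroup.mem_bot, commutatorElement_eq_one_iff_mul_comm] at this
      exact this.symm
    have hQbot : (⊤ : Subgroup (H ⧸ Z)).lowerCentralSeries n = ⊥ := by
      rw [← lcs_map_eq (QuotientGroup.mk' Z) hsurj n, Subgroup.map_eq_bot_iff,
        QuotientGroup.ker_mk']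
      exact hle
    have hgenQ : Subgroup.closure
        ({QuotientGroup.mk' Z x, QuotientGroup.mk' Z y} : Set (H ⧸ Z)) = ⊤ := by
      rw [← Set.image_pair, ← MonoidHom.map_closure, hgen,
        Subgroup.map_top_of_surjective _ hsurj]
    have fQ : Finite (H ⧸ Z) :=
      ih (H ⧸ Z) inferInstance _ _ ((QuotientGroup.mk' Z).isOfFinOrder hx)
        ((QuotientGroup.mk' Z).isOfFinOrder hy) hgenQ hQbot
    haveI fcs : Finite (commutatorSet H) := finite_commutatorSet_of_finite_quotient_center fQ
    haveI fcomm : Finite (_root_.commutator H) := inferInstance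
    have hgenA : Subgroup.closure
        ({Abelianization.of x, Abelianization.of y} : Set (Abelianization H)) = ⊤ := by
      rw [← Set.image_pair, ← MonoidHom.map_closure, hgen,
        Subgroup.map_top_of_surjective Abelianization.of (fun a => QuotientGroup.mk_surjective a)]
    haveI fA : Finite (Abelianization H) :=
      finite_of_closure_pair_torsion (Abelianization.of.isOfFinOrder hx)
        (Abelianization.of.isOfFinOrder hy) hgenA
    haveI fquot : Finite (H ⧸ _root_.commutator H) := fA
    exact Finite.of_equiv _ (Subgroup.groupEquivQuotientProdSubgroup
      (s := _root_.commutator H)).symm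

private lemma isOfFinOrder_mul_of_lcs_bot {H : Type u} [Group H] {n : ℕ}
    (hbot : (⊤ : Subgroup H).lowerCentralSeries n = ⊥) {x y : H}
    (hx : IsOfFinOrder x) (hy : IsOfFinOrder y) : IsOfFinOrder (x * y) := by
  set S := Subgroup.closure ({x, y} : Set H) with hS
  have hxS : x ∈ S := Subgroup.subset_closure (by simp)
  have hyS : y ∈ S := Subgroup.subset_closure (by simp)
  have hSbot : (⊤ : Subgroup S).lowerCentralSeries n = ⊥ := by
    have h1 : Subgroup.map S.subtype ((⊤ : Subgroup S).lowerCentralSeries n) = ⊥ :=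
      le_bot_iff.mp (hbot ▸ Subgroup.lowerCentralSeries_map_subtype_le S n)
    rwa [Subgroup.map_eq_bot_iff, Subgroup.ker_subtype, le_bot_iff] at h1
  have hgenS : Subgroup.closure ({⟨x, hxS⟩, ⟨y, hyS⟩} : Set S) = ⊤ := by
    rw [eq_top_iff, ← Subgroup.closure_closure_coe_preimage (k := ({x, y} : Set H))]
    apply Subgroup.closure_mono
    rintro ⟨g, hg⟩ h
    rcases h with h | h
    · exact Or.inl (Subtype.ext h)
    · exact Or.inr (Subtype.ext h)
  have hxS' : IsOfFinOrder (⟨x, hxS⟩ : S) := by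
    obtain ⟨k, hk, hpow⟩ := isOfFinOrder_iff_pow_eq_one.mp hx
    exact isOfFinOrder_iff_pow_eq_one.mpr ⟨k, hk, Subtype.ext (by simpa using hpow)⟩
  have hyS' : IsOfFinOrder (⟨y, hyS⟩ : S) := by
    obtain ⟨k, hk, hpow⟩ := isOfFinOrder_iff_pow_eq_one.mp hy
    exact isOfFinOrder_iff_pow_eq_one.mpr ⟨k, hk, Subtype.ext (by simpa using hpow)⟩
  haveI : Finite S :=
    finite_of_nilpotent_two_torsion n S inferInstance _ _ hxS' hyS' hgenS hSbot
  have : IsOfFinOrder ((⟨x, hxS⟩ : S) * ⟨y, hyS⟩) := isOfFinOrder_of_finite _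
  exact S.subtype.isOfFinOrder this

/-- Key closure property: torsion-mod-`Gⁿ` elements are closed under multiplication. -/
private lemma key_mul {a b : G} {n k m : ℕ} (hk : 1 ≤ k) (hm : 1 ≤ m)
    (ha : a ^ k ∈ (⊤ : Subgroup G).lowerCentralSeries n) (hb : b ^ m ∈ (⊤ : Subgroup G).lowerCentralSeries n) :
    ∃ r, 1 ≤ r ∧ (a * b) ^ r ∈ (⊤ : Subgroup G).lowerCentralSeries n := by
  set N := (⊤ : Subgroup G).lowerCentralSeries n with hN
  have hsurj : Function.Surjective (QuotientGroup.mk' N) := QuotientGroup.mk'_surjective N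
  have hQbot : (⊤ : Subgroup (G ⧸ N)).lowerCentralSeries n = ⊥ := by
    rw [← lcs_map_eq (QuotientGroup.mk' N) hsurj n, Subgroup.map_eq_bot_iff,
      QuotientGroup.ker_mk']
  have hxa : IsOfFinOrder ((a : G ⧸ N)) := by
    refine isOfFinOrder_iff_pow_eq_one.mpr ⟨k, hk, ?_⟩
    rw [← QuotientGroup.mk_pow, QuotientGroup.eq_one_iff]
    exact ha
  have hxb : IsOfFinOrder ((b : G ⧸ N)) := by
    refine isOfFinOrder_iff_pow_eq_one.mpr ⟨m, hm, ?_⟩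
    rw [← QuotientGroup.mk_pow, QuotientGroup.eq_one_iff]
    exact hb
  have hab : IsOfFinOrder ((a : G ⧸ N) * (b : G ⧸ N)) :=
    isOfFinOrder_mul_of_lcs_bot hQbot hxa hxb
  obtain ⟨r, hr, hpow⟩ := isOfFinOrder_iff_pow_eq_one.mp hab
  refine ⟨r, hr, (QuotientGroup.eq_one_iff _).mp ?_⟩
  rw [QuotientGroup.mk_pow, QuotientGroup.mk_mul]
  exact hpow

end Aux

/-- For a group `G` let
`Tor(G) = {a ∈ G | ∀ n, ∃ k ≥ 1, a^k ∈ Gⁿ}`, where `Gⁿ` is the lower central series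
(Mathlib's `(⊤ : Subgroup G).lowerCentralSeries n` is the paper's `G^{n+1}`).  Then `Tor(G)` is a
normal subgroup of `G`, and if `G` is abelian then `Tor(G)` is exactly the torsion
subgroup (the set of elements of finite order). -/
theorem stmt12 (G : Type*) [Group G] :
    ∃ H : Subgroup G, H.Normal ∧
      (∀ a : G, a ∈ H ↔ ∀ n : ℕ, ∃ k : ℕ, 1 ≤ k ∧ a ^ k ∈ (⊤ : Subgroup G).lowerCentralSeries n) ∧
      ((∀ x y : G, x * y = y * x) → ∀ a : G, a ∈ H ↔ IsOfFinOrder a) := by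
  refine ⟨{ carrier := {a : G | ∀ n : ℕ, ∃ k : ℕ, 1 ≤ k ∧ a ^ k ∈ (⊤ : Subgroup G).lowerCentralSeries n}
            one_mem' := fun n => ⟨1, le_refl 1, by simpa using Subgroup.one_mem _⟩
            mul_mem' := ?_
            inv_mem' := ?_ }, ?_, ?_, ?_⟩
  · intro a b ha hb n
    obtain ⟨k, hk, hak⟩ := ha n
    obtain ⟨m, hm, hbm⟩ := hb n
    exact key_mul hk hm hak hbm
  · intro a ha n
    obtain ⟨k, hk, hak⟩ := ha n
    exact ⟨k, hk, by rw [inv_pow]; exact Subgroup.inv_mem _ hak⟩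
  · constructor
    intro a ha g n
    obtain ⟨k, hk, hak⟩ := ha n
    refine ⟨k, hk, ?_⟩
    have : (g * a * g⁻¹) ^ k = g * a ^ k * g⁻¹ := by
      rw [conj_pow]
    rw [this]
    exact (lowerCentralSeries_normal ⊤ n).conj_mem _ hak g
  · intro a; exact Iff.rfl
  · intro hcomm a
    constructor
    · intro ha
      obtain ⟨k, hk, hak⟩ := ha 1
      have hc : _root_.commutator G = ⊥ := by
        rw [_root_.commutator_def, commutator_eq_bot_iff_le_centralizer]
        intro g _
        rw [Subgroup.mem_centralizer_iff]
        intro h _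
        exact hcomm h g
      rw [Subgroup.top_lowerCentralSeries_one, hc, Subgroup.mem_bot] at hak
      exact isOfFinOrder_iff_pow_eq_one.mpr ⟨k, hk, hak⟩
    · intro ha n
      obtain ⟨k, hk, hpow⟩ := isOfFinOrder_iff_pow_eq_one.mp ha
      exact ⟨k, hk, by rw [hpow]; exact Subgroup.one_mem _⟩
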